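/- Let M be an n-dimensional (N(k),ξ)-semi-Riemannian manifold. If 𝒯_a is the quasi-conformal curvature tensor 𝒞_* (with a₁ ≠ 0 and a₀+(n−2)a₁ ≠ 0), the ℳ-projective curvature tensor ℳ, or the 𝒲₂-curvature tensor, then M is ξ-𝒯_a-flat if and only if M is Einstein. -/

import Mathlib

open Finset

/-- An algebraic (pointwise) model of an `n`-dimensional semi-Riemannian manifold:
a real vector space of tangent vectors together with a metric `g`, an orthonormal
frame `e` with signs `eps`, and a Riemann curvature tensor `R` satisfying the
standard curvature symmetries.  The Ricci tensor `S`, the Ricci operator `Q` and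
the scalar curvature `r` are obtained by tracing with respect to the frame. -/
structure SemiRiemannian (n : ℕ) where
  V : Type
  [instAddCommGroup : AddCommGroup V]
  [instModule : Module ℝ V]
  g : V → V → ℝ
  g_symm : ∀ X Y, g X Y = g Y X
  g_add_left : ∀ X Y Z, g (X + Y) Z = g X Z + g Y Z
  g_smul_left : ∀ (c : ℝ) (X Y : V), g (c • X) Y = c * g X Y
  e : Fin n → V
  eps : Fin n → ℝ
  eps_unit : ∀ i, eps i = 1 ∨ eps i = -1
  g_frame : ∀ i j, g (e i) (e j) = if i = j then eps i else 0
  expand : ∀ X : V, X = ∑ i, (eps i * g X (e i)) • e i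
  R : V → V → V → V
  R_add₁ : ∀ X X' Y Z, R (X + X') Y Z = R X Y Z + R X' Y Z
  R_smul₁ : ∀ (c : ℝ) (X Y Z : V), R (c • X) Y Z = c • R X Y Z
  R_add₂ : ∀ X Y Y' Z, R X (Y + Y') Z = R X Y Z + R X Y' Z
  R_smul₂ : ∀ (c : ℝ) (X Y Z : V), R X (c • Y) Z = c • R X Y Z
  R_add₃ : ∀ X Y Z Z', R X Y (Z + Z') = R X Y Z + R X Y Z'
  R_smul₃ : ∀ (c : ℝ) (X Y Z : V), R X Y (c • Z) = c • R X Y Z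
  R_alt : ∀ X Y Z, R X Y Z = - R Y X Z
  R_skew : ∀ X Y Z W, g (R X Y Z) W = - (g (R X Y W) Z)
  R_pair : ∀ X Y Z W, g (R X Y Z) W = g (R Z W X) Y
  R_bianchi : ∀ X Y Z, R X Y Z + R Y Z X + R Z X Y = 0

attribute [instance] SemiRiemannian.instAddCommGroup SemiRiemannian.instModule

namespace SemiRiemannian

variable {n : ℕ} (M : SemiRiemannian n)

/-- The Ricci tensor `S`. -/
def S (X Y : M.V) : ℝ := ∑ i, M.eps i * M.g (M.R (M.e i) X Y) (M.e i)

/-- The Ricci operator `Q`, characterised by `g (Q X) Y = S X Y`. -/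
def Q (X : M.V) : M.V := ∑ i, (M.eps i * M.S X (M.e i)) • M.e i

/-- The scalar curvature `r`. -/
def r : ℝ := ∑ i, M.eps i * M.S (M.e i) (M.e i)

/-- The `𝒯`-curvature tensor with coefficients `a₀, …, a₇`:
`𝒯(X,Y)Z = a₀ R(X,Y)Z + a₁ S(Y,Z)X + a₂ S(X,Z)Y + a₃ S(X,Y)Z + a₄ g(Y,Z)QX
  + a₅ g(X,Z)QY + a₆ g(X,Y)QZ + a₇ r (g(Y,Z)X − g(X,Z)Y)`. -/
def T (a₀ a₁ a₂ a₃ a₄ a₅ a₆ a₇ : ℝ) (X Y Z : M.V) : M.V :=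
  a₀ • M.R X Y Z + (a₁ * M.S Y Z) • X + (a₂ * M.S X Z) • Y + (a₃ * M.S X Y) • Z
    + (a₄ * M.g Y Z) • M.Q X + (a₅ * M.g X Z) • M.Q Y + (a₆ * M.g X Y) • M.Q Z
    + (a₇ * M.r) • (M.g Y Z • X - M.g X Z • Y)

/-- The Ricci tensor `S_𝒯` of the `𝒯`-curvature tensor. -/
def ST (a₀ a₁ a₂ a₃ a₄ a₅ a₆ a₇ : ℝ) (X Y : M.V) : ℝ :=
  (a₀ + (n : ℝ) * a₁ + a₂ + a₃ + a₅ + a₆) * M.S X Y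
    + (a₄ + ((n : ℝ) - 1) * a₇) * M.r * M.g X Y

/-- `ξ` belongs to the `k`-nullity distribution `N(k)`:
`R(X,Y)ξ = k (g(Y,ξ)X − g(X,ξ)Y)`. -/
def Nullity (k : ℝ) (ξ : M.V) : Prop :=
  ∀ X Y : M.V, M.R X Y ξ = k • (M.g Y ξ • X - M.g X ξ • Y)

/-- `𝒯_a`-semisymmetry: `R(X,Y) ⬝ 𝒯_a = 0`, where `R(X,Y)` acts as a derivation
on the `(1,3)`-tensor `𝒯_a`. -/
def TSemisymmetric (a₀ a₁ a₂ a₃ a₄ a₅ a₆ a₇ : ℝ) : Prop :=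
  ∀ X Y U V W : M.V,
    M.R X Y (M.T a₀ a₁ a₂ a₃ a₄ a₅ a₆ a₇ U V W)
      - M.T a₀ a₁ a₂ a₃ a₄ a₅ a₆ a₇ (M.R X Y U) V W
      - M.T a₀ a₁ a₂ a₃ a₄ a₅ a₆ a₇ U (M.R X Y V) W
      - M.T a₀ a₁ a₂ a₃ a₄ a₅ a₆ a₇ U V (M.R X Y W) = 0

end SemiRiemannian

namespace SemiRiemannian

variable {n : ℕ} (M : SemiRiemannian n)

lemma g_zero_left (Y : M.V) : M.g 0 Y = 0 := by
  have h := M.g_smul_left 0 Y Y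
  simpa using h

lemma g_zero_right (X : M.V) : M.g X 0 = 0 := by
  rw [M.g_symm, M.g_zero_left]

lemma g_add_right (X Y Z : M.V) : M.g X (Y + Z) = M.g X Y + M.g X Z := by
  rw [M.g_symm, M.g_add_left, M.g_symm Y X, M.g_symm Z X]

lemma g_smul_right (c : ℝ) (X Y : M.V) : M.g X (c • Y) = c * M.g X Y := by
  rw [M.g_symm, M.g_smul_left, M.g_symm]

lemma g_neg_left (X Y : M.V) : M.g (-X) Y = - M.g X Y := by
  have h := M.g_smul_left (-1) X Y
  simpa using h

lemma g_sub_left (X Y Z : M.V) : M.g (X - Y) Z = M.g X Z - M.g Y Z := by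
  rw [sub_eq_add_neg, M.g_add_left, M.g_neg_left, sub_eq_add_neg]

lemma g_sum_left {ι : Type*} (s : Finset ι) (f : ι → M.V) (Y : M.V) :
    M.g (∑ i ∈ s, f i) Y = ∑ i ∈ s, M.g (f i) Y := by
  classical
  induction s using Finset.induction with
  | empty => simp [M.g_zero_left]
  | insert _ _ h ih => rw [Finset.sum_insert h, Finset.sum_insert h, M.g_add_left, ih]

lemma eps_sq (i : Fin n) : M.eps i * M.eps i = 1 := by
  rcases M.eps_unit i with h | h <;> rw [h] <;> norm_num

lemma g_frame_diag (i : Fin n) : M.g (M.e i) (M.e i) = M.eps i := by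
  rw [M.g_frame]; simp

lemma sum_eps_g (X Y : M.V) :
    ∑ i, M.eps i * (M.g X (M.e i) * M.g Y (M.e i)) = M.g X Y := by
  calc ∑ i, M.eps i * (M.g X (M.e i) * M.g Y (M.e i))
      = M.g (∑ i, (M.eps i * M.g X (M.e i)) • M.e i) Y := by
        rw [M.g_sum_left]
        refine Finset.sum_congr rfl fun i _ => ?_
        rw [M.g_smul_left, M.g_symm (M.e i) Y]
        ring
    _ = M.g X Y := by rw [← M.expand X]

lemma sum_eps_sq : ∑ i : Fin n, M.eps i * M.eps i = (n : ℝ) := by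
  rw [Finset.sum_congr rfl fun i _ => M.eps_sq i]
  simp

lemma R_self (X Z : M.V) : M.R X X Z = 0 := by
  have h := M.R_alt X X Z
  have h2 : M.R X X Z + M.R X X Z = 0 := by
    nth_rewrite 1 [h]; simp
  have h3 : (2 : ℝ) • M.R X X Z = 0 := by rw [two_smul]; exact h2
  have := smul_eq_zero.mp h3
  simpa using this

lemma R_zero₃ (X Y : M.V) : M.R X Y 0 = 0 := by
  have h := M.R_smul₃ 0 X Y 0
  simpa using h

lemma S_symm (X Y : M.V) : M.S X Y = M.S Y X := by
  unfold S
  refine Finset.sum_congr rfl fun i _ => ?_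
  congr 1
  have h1 : M.g (M.R (M.e i) X Y) (M.e i) = M.g (M.R Y (M.e i) (M.e i)) X :=
    M.R_pair (M.e i) X Y (M.e i)
  have h2 : M.g (M.R Y (M.e i) (M.e i)) X = - M.g (M.R Y (M.e i) X) (M.e i) := by
    rw [M.R_skew Y (M.e i) (M.e i) X]
  have h3 : M.R Y (M.e i) X = - M.R (M.e i) Y X := M.R_alt Y (M.e i) X
  rw [h1, h2, h3]
  have h4 : M.g (-M.R (M.e i) Y X) (M.e i) = - M.g (M.R (M.e i) Y X) (M.e i) :=
    M.g_neg_left _ _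
  rw [h4, neg_neg]

lemma S_add_right (X Y Z : M.V) : M.S X (Y + Z) = M.S X Y + M.S X Z := by
  unfold S
  rw [← Finset.sum_add_distrib]
  refine Finset.sum_congr rfl fun i _ => ?_
  rw [M.R_add₃, M.g_add_left]
  ring

lemma S_smul_right (c : ℝ) (X Y : M.V) : M.S X (c • Y) = c * M.S X Y := by
  unfold S
  rw [Finset.mul_sum]
  refine Finset.sum_congr rfl fun i _ => ?_
  rw [M.R_smul₃, M.g_smul_left]
  ring

lemma S_zero_right (X : M.V) : M.S X 0 = 0 := by
  have h := M.S_smul_right 0 X 0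
  simpa using h

lemma S_sum_right {ι : Type*} (s : Finset ι) (X : M.V) (f : ι → M.V) :
    M.S X (∑ i ∈ s, f i) = ∑ i ∈ s, M.S X (f i) := by
  classical
  induction s using Finset.induction with
  | empty => simp [M.S_zero_right]
  | insert _ _ h ih => rw [Finset.sum_insert h, Finset.sum_insert h, M.S_add_right, ih]

lemma g_Q (X Y : M.V) : M.g (M.Q X) Y = M.S X Y := by
  unfold Q
  rw [M.g_sum_left]
  conv_rhs => rw [M.expand Y]
  rw [M.S_sum_right]
  refine Finset.sum_congr rfl fun i _ => ?_
  rw [M.g_smul_left, M.S_smul_right, M.g_symm (M.e i) Y]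
  ring

variable {k ε : ℝ} {ξ : M.V}

lemma S_nullity (hk : M.Nullity k ξ) (X : M.V) :
    M.S X ξ = k * ((n : ℝ) - 1) * M.g X ξ := by
  unfold S
  have hterm : ∀ i : Fin n, M.eps i * M.g (M.R (M.e i) X ξ) (M.e i)
      = k * (M.g X ξ * (M.eps i * M.eps i)) - k * (M.eps i * (M.g ξ (M.e i) * M.g X (M.e i))) := by
    intro i
    rw [hk (M.e i) X, M.g_smul_left, M.g_sub_left, M.g_smul_left, M.g_smul_left,
      M.g_frame_diag, M.g_symm (M.e i) ξ]
    ring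
  rw [Finset.sum_congr rfl fun i _ => hterm i, Finset.sum_sub_distrib, ← Finset.mul_sum,
    ← Finset.mul_sum, ← Finset.mul_sum, M.sum_eps_sq, M.sum_eps_g ξ X, M.g_symm ξ X]
  ring

lemma Q_nullity (hk : M.Nullity k ξ) : M.Q ξ = (k * ((n : ℝ) - 1)) • ξ := by
  unfold Q
  conv_rhs => rw [M.expand ξ]
  rw [Finset.smul_sum]
  refine Finset.sum_congr rfl fun i _ => ?_
  rw [M.S_symm, M.S_nullity hk, smul_smul, M.g_symm (M.e i) ξ]
  ring_nf

lemma r_einstein {α : ℝ} (hE : ∀ X Y : M.V, M.S X Y = α * M.g X Y) :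
    M.r = (n : ℝ) * α := by
  unfold r
  have : ∀ i : Fin n, M.eps i * M.S (M.e i) (M.e i) = α := by
    intro i
    rw [hE, M.g_frame_diag]
    rcases M.eps_unit i with h | h <;> rw [h] <;> ring
  rw [Finset.sum_congr rfl fun i _ => this i]
  simp [Finset.sum_const, Finset.card_univ, mul_comm]

lemma Q_einstein {α : ℝ} (hE : ∀ X Y : M.V, M.S X Y = α * M.g X Y) (Z : M.V) :
    M.Q Z = α • Z := by
  unfold Q
  conv_rhs => rw [M.expand Z]
  rw [Finset.smul_sum]
  refine Finset.sum_congr rfl fun i _ => ?_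
  rw [hE, smul_smul]
  ring_nf

lemma flat_scalar (hξ : M.g ξ ξ = ε) (hk : M.Nullity k ξ)
    {a₀ a₁ a₂ a₃ a₄ a₅ a₆ a₇ : ℝ} {X : M.V}
    (h : M.T a₀ a₁ a₂ a₃ a₄ a₅ a₆ a₇ X ξ ξ = 0) (W : M.V) :
    ε * (a₀ * k + a₁ * (k * ((n : ℝ) - 1)) + a₇ * M.r) * M.g X W + a₄ * ε * M.S X W
      + ((a₂ + a₃ + a₅ + a₆) * (k * ((n : ℝ) - 1)) - a₀ * k - a₇ * M.r)
        * (M.g X ξ * M.g ξ W) = 0 := by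
  have hSξ : ∀ Z : M.V, M.S Z ξ = k * ((n : ℝ) - 1) * M.g Z ξ := M.S_nullity hk
  have hQξ : M.Q ξ = (k * ((n : ℝ) - 1)) • ξ := M.Q_nullity hk
  have h' : M.g (M.T a₀ a₁ a₂ a₃ a₄ a₅ a₆ a₇ X ξ ξ) W = 0 := by
    rw [h, M.g_zero_left]
  rw [T] at h'
  rw [hk X ξ] at h'
  simp only [M.g_add_left, M.g_smul_left, M.g_sub_left, hQξ, hSξ, hξ, M.g_Q] at h'
  linear_combination h'

lemma flat_trace (hξ : M.g ξ ξ = ε) (hε2 : ε * ε = 1) (hk : M.Nullity k ξ)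
    {a₀ a₁ a₂ a₃ a₄ a₅ a₆ a₇ : ℝ}
    (h : ∀ X : M.V, M.T a₀ a₁ a₂ a₃ a₄ a₅ a₆ a₇ X ξ ξ = 0) :
    (a₀ * k + a₁ * (k * ((n : ℝ) - 1)) + a₇ * M.r) * (n : ℝ) + a₄ * M.r
      + ((a₂ + a₃ + a₅ + a₆) * (k * ((n : ℝ) - 1)) - a₀ * k - a₇ * M.r) = 0 := by
  set A := a₀ * k + a₁ * (k * ((n : ℝ) - 1)) + a₇ * M.r with hA
  set C := (a₂ + a₃ + a₅ + a₆) * (k * ((n : ℝ) - 1)) - a₀ * k - a₇ * M.r with hC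
  have key : ∀ i : Fin n,
      ε * A * M.g (M.e i) (M.e i) + a₄ * ε * M.S (M.e i) (M.e i)
        + C * (M.g (M.e i) ξ * M.g ξ (M.e i)) = 0 :=
    fun i => M.flat_scalar hξ hk (h (M.e i)) (M.e i)
  have hsum : ∑ i : Fin n, M.eps i *
      (ε * A * M.g (M.e i) (M.e i) + a₄ * ε * M.S (M.e i) (M.e i)
        + C * (M.g (M.e i) ξ * M.g ξ (M.e i))) = 0 :=
    Finset.sum_eq_zero fun i _ => by rw [key i, mul_zero]
  have split : ∑ i : Fin n, M.eps i *
      (ε * A * M.g (M.e i) (M.e i) + a₄ * ε * M.S (M.e i) (M.e i)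
        + C * (M.g (M.e i) ξ * M.g ξ (M.e i)))
      = ε * A * (∑ i : Fin n, M.eps i * M.g (M.e i) (M.e i))
        + a₄ * ε * (∑ i : Fin n, M.eps i * M.S (M.e i) (M.e i))
        + C * (∑ i : Fin n, M.eps i * (M.g (M.e i) ξ * M.g ξ (M.e i))) := by
    rw [Finset.mul_sum, Finset.mul_sum, Finset.mul_sum, ← Finset.sum_add_distrib,
      ← Finset.sum_add_distrib]
    exact Finset.sum_congr rfl fun i _ => by ring
  have e1 : ∑ i : Fin n, M.eps i * M.g (M.e i) (M.e i) = (n : ℝ) := by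
    rw [Finset.sum_congr rfl fun i (_ : i ∈ Finset.univ) => by rw [M.g_frame_diag]]
    exact M.sum_eps_sq
  have e2 : ∑ i : Fin n, M.eps i * M.S (M.e i) (M.e i) = M.r := rfl
  have e3 : ∑ i : Fin n, M.eps i * (M.g (M.e i) ξ * M.g ξ (M.e i)) = ε := by
    rw [Finset.sum_congr rfl fun i (_ : i ∈ Finset.univ) => by
      rw [M.g_symm (M.e i) ξ]]
    rw [M.sum_eps_g ξ ξ, hξ]
  rw [split, e1, e2, e3] at hsum
  linear_combination ε * hsum - (A * (n : ℝ) + a₄ * M.r + C) * hε2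

lemma einstein_of_key (hε2 : ε * ε = 1) {A B : ℝ} (hB : B ≠ 0)
    (h : ∀ X W : M.V, ε * A * M.g X W + B * ε * M.S X W = 0) :
    ∃ α : ℝ, ∀ X Y : M.V, M.S X Y = α * M.g X Y := by
  refine ⟨-A / B, fun X Y => ?_⟩
  have h1 : A * M.g X Y + B * M.S X Y = 0 := by
    linear_combination ε * (h X Y) - (A * M.g X Y + B * M.S X Y) * hε2
  field_simp
  linear_combination h1

lemma flat_of_einstein (hk : M.Nullity k ξ) {α : ℝ}
    (hE : ∀ X Y : M.V, M.S X Y = α * M.g X Y)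
    {a₀ a₁ a₂ a₃ a₄ a₅ a₆ a₇ : ℝ}
    (h1 : a₀ * k + (a₁ + a₄) * α + a₇ * ((n : ℝ) * α) = 0)
    (h2 : a₀ * k - (a₂ + a₅) * α + a₇ * ((n : ℝ) * α) = 0)
    (h3 : a₃ + a₆ = 0)
    (X Y : M.V) : M.T a₀ a₁ a₂ a₃ a₄ a₅ a₆ a₇ X Y ξ = 0 := by
  have hr : M.r = (n : ℝ) * α := M.r_einstein hE
  have hQ : ∀ Z : M.V, M.Q Z = α • Z := M.Q_einstein hE
  rw [T, hk X Y]
  simp only [hE, hQ, hr]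
  match_scalars
  · linear_combination M.g Y ξ * h1
  · linear_combination (- M.g X ξ) * h2
  · linear_combination (α * M.g X Y) * h3

end SemiRiemannian


/-- For the quasi-conformal tensor `𝒞₊` (with `a₁ ≠ 0` and
`a₀+(n−2)a₁ ≠ 0`), the `ℳ`-projective tensor and the `𝒲₂`-tensor, an
`(N(k),ξ)`-semi-Riemannian manifold is `ξ`-`𝒯_a`-flat iff it is Einstein. -/
theorem xi_Ta_flat_iff_Einstein
    (n : ℕ) (M : SemiRiemannian n) (k ε : ℝ) (ξ : M.V) (η : M.V → ℝ)
    (hε : ε = 1 ∨ ε = -1) (hξ : M.g ξ ξ = ε)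
    (hη : ∀ X : M.V, η X = ε * M.g X ξ)
    (hk : M.Nullity k ξ) :
    (∀ b₀ b₁ : ℝ, b₁ ≠ 0 → b₀ + ((n : ℝ) - 2) * b₁ ≠ 0 →
      ((∀ X Y : M.V,
          M.T b₀ b₁ (-b₁) 0 b₁ (-b₁) 0 (-((1/(n : ℝ)) * (b₀/((n : ℝ) - 1) + 2*b₁))) X Y ξ = 0)
        ↔ (∃ α : ℝ, ∀ X Y : M.V, M.S X Y = α * M.g X Y)))
    ∧ ((∀ X Y : M.V, M.T 1 (-(1/(2*((n : ℝ) - 1)))) (1/(2*((n : ℝ) - 1))) 0 (-(1/(2*((n : ℝ) - 1)))) (1/(2*((n : ℝ) - 1))) 0 0 X Y ξ = 0)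
        ↔ (∃ α : ℝ, ∀ X Y : M.V, M.S X Y = α * M.g X Y))
    ∧ ((∀ X Y : M.V, M.T 1 0 0 0 (-(1/((n : ℝ) - 1))) (1/((n : ℝ) - 1)) 0 0 X Y ξ = 0)
        ↔ (∃ α : ℝ, ∀ X Y : M.V, M.S X Y = α * M.g X Y)) := by
  have hεne : ε ≠ 0 := by rcases hε with h | h <;> rw [h] <;> norm_num
  have hε2 : ε * ε = 1 := by rcases hε with h | h <;> rw [h] <;> norm_num
  rcases Nat.lt_or_ge n 2 with hn | hn
  · interval_cases n
    · exfalso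
      have hξ0 : ξ = 0 := by simpa using M.expand ξ
      rw [hξ0, M.g_zero_left] at hξ
      exact hεne hξ.symm
    · have hR0 : ∀ X Y Z : M.V, M.R X Y Z = 0 := by
        intro X Y Z
        conv_lhs => rw [M.expand X, M.expand Y]
        simp [Fin.sum_univ_one, M.R_smul₁, M.R_smul₂, M.R_self]
      have hS0 : ∀ X Y : M.V, M.S X Y = 0 := by
        intro X Y; unfold SemiRiemannian.S; simp [hR0, M.g_zero_left]
      have hr0 : M.r = 0 := by
        unfold SemiRiemannian.r; simp [hS0]
      have hQ0 : ∀ X : M.V, M.Q X = 0 := by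
        intro X; unfold SemiRiemannian.Q; simp [hS0]
      have hT0 : ∀ a₀ a₁ a₂ a₃ a₄ a₅ a₆ a₇ : ℝ, ∀ X Y : M.V,
          M.T a₀ a₁ a₂ a₃ a₄ a₅ a₆ a₇ X Y ξ = 0 := by
        intro a₀ a₁ a₂ a₃ a₄ a₅ a₆ a₇ X Y
        rw [SemiRiemannian.T]
        simp [hR0, hS0, hr0, hQ0]
      have hEin : ∃ α : ℝ, ∀ X Y : M.V, M.S X Y = α * M.g X Y :=
        ⟨0, fun X Y => by rw [hS0]; ring⟩
      exact ⟨fun b₀ b₁ _ _ => ⟨fun _ => hEin, fun _ X Y => hT0 _ _ _ _ _ _ _ _ X Y⟩,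
        ⟨fun _ => hEin, fun _ X Y => hT0 _ _ _ _ _ _ _ _ X Y⟩,
        ⟨fun _ => hEin, fun _ X Y => hT0 _ _ _ _ _ _ _ _ X Y⟩⟩
  · have hn2 : (2 : ℝ) ≤ (n : ℝ) := by exact_mod_cast hn
    have hn0 : (n : ℝ) ≠ 0 := by intro h; rw [h] at hn2; linarith
    have hn1 : (n : ℝ) - 1 ≠ 0 := by intro h; nlinarith
    have hαeq : ∀ α : ℝ, (∀ X Y : M.V, M.S X Y = α * M.g X Y) →
        α = k * ((n : ℝ) - 1) := by
      intro α hE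
      have h1 := hE ξ ξ
      have h2 := M.S_nullity hk ξ
      rw [hξ] at h1 h2
      rw [h1] at h2
      exact mul_right_cancel₀ hεne h2
    refine ⟨?_, ?_, ?_⟩
    · -- quasi-conformal
      intro b₀ b₁ hb₁ hb
      constructor
      · intro hflat
        have tr := M.flat_trace hξ hε2 hk (fun X => hflat X ξ)
        have hr : M.r = (n : ℝ) * ((n : ℝ) - 1) * k := by
          have hfac : ((n : ℝ) - 1) * ((b₀ + ((n : ℝ) - 2) * b₁)
              * (M.r - (n : ℝ) * ((n : ℝ) - 1) * k)) = 0 := by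
            field_simp at tr
            linear_combination -tr
          rcases mul_eq_zero.mp ((mul_eq_zero.mp hfac).resolve_left hn1) with h | h
          · exact absurd h hb
          · exact sub_eq_zero.mp h
        have hC : (-b₁ + 0 + -b₁ + 0) * (k * ((n : ℝ) - 1)) - b₀ * k
            - (-((1/(n : ℝ)) * (b₀/((n : ℝ) - 1) + 2*b₁))) * M.r = 0 := by
          rw [hr]; field_simp; try ring
        have hkey : ∀ X W : M.V,
            ε * (b₀ * k + b₁ * (k * ((n : ℝ) - 1))
                + (-((1/(n : ℝ)) * (b₀/((n : ℝ) - 1) + 2*b₁))) * M.r) * M.g X W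
              + b₁ * ε * M.S X W = 0 := by
          intro X W
          have hfs := M.flat_scalar hξ hk (hflat X ξ) W
          linear_combination hfs - (M.g X ξ * M.g ξ W) * hC
        exact M.einstein_of_key hε2 hb₁ hkey
      · rintro ⟨α, hE⟩ X Y
        have hα : α = k * ((n : ℝ) - 1) := hαeq α hE
        refine M.flat_of_einstein hk hE ?_ ?_ ?_ X Y
        · rw [hα]; field_simp; try ring
        · rw [hα]; field_simp; try ring
        · norm_num
    · -- M-projective
      constructor
      · intro hflat
        have hcne : -(1/(2*((n : ℝ) - 1))) ≠ 0 := by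
          simp only [ne_eq, neg_eq_zero]
          exact one_div_ne_zero (by intro h; apply hn1; nlinarith)
        have hC : ((1/(2*((n : ℝ) - 1))) + 0 + (1/(2*((n : ℝ) - 1))) + 0) * (k * ((n : ℝ) - 1))
            - 1 * k - 0 * M.r = 0 := by
          field_simp
          try ring
        have hkey : ∀ X W : M.V,
            ε * (1 * k + (-(1/(2*((n : ℝ) - 1)))) * (k * ((n : ℝ) - 1)) + 0 * M.r) * M.g X W
              + (-(1/(2*((n : ℝ) - 1)))) * ε * M.S X W = 0 := by
          intro X W
          have hfs := M.flat_scalar hξ hk (hflat X ξ) W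
          linear_combination hfs - (M.g X ξ * M.g ξ W) * hC
        exact M.einstein_of_key hε2 hcne hkey
      · rintro ⟨α, hE⟩ X Y
        have hα : α = k * ((n : ℝ) - 1) := hαeq α hE
        refine M.flat_of_einstein hk hE ?_ ?_ ?_ X Y
        · rw [hα]; field_simp; try ring
        · rw [hα]; field_simp; try ring
        · norm_num
    · -- W₂
      constructor
      · intro hflat
        have hdne : -(1/((n : ℝ) - 1)) ≠ 0 := by
          simp only [ne_eq, neg_eq_zero]
          exact one_div_ne_zero hn1
        have hC : (0 + 0 + (1/((n : ℝ) - 1)) + 0) * (k * ((n : ℝ) - 1))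
            - 1 * k - 0 * M.r = 0 := by
          field_simp
          try ring
        have hkey : ∀ X W : M.V,
            ε * (1 * k + 0 * (k * ((n : ℝ) - 1)) + 0 * M.r) * M.g X W
              + (-(1/((n : ℝ) - 1))) * ε * M.S X W = 0 := by
          intro X W
          have hfs := M.flat_scalar hξ hk (hflat X ξ) W
          linear_combination hfs - (M.g X ξ * M.g ξ W) * hC
        exact M.einstein_of_key hε2 hdne hkey
      · rintro ⟨α, hE⟩ X Y
        have hα : α = k * ((n : ℝ) - 1) := hαeq α hE
        refine M.flat_of_einstein hk hE ?_ ?_ ?_ X Y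
        · rw [hα]; field_simp; try ring
        · rw [hα]; field_simp; try ring
        · norm_num
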